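/- Let S ⊂ P³ be the smooth cubic surface with equation W³ + W(X² + Y² + Z²) + βXYZ = 0 with β ∈ C, β ≠ 0. Every point of S fixed by the cyclic permutation automorphism (W:X:Y:Z) ↦ (W:Y:Z:X) is of the form (u : v : v : v) with u, v ∈ C*, and the group generated by (W:X:Y:Z) ↦ (W:X:−Y:−Z) and (W:X:Y:Z) ↦ (W:−X:−Y:Z) (each of which preserves S) sends each such point to 3 other distinct points. In particular no point of S is fixed by the whole group generated by these three automorphisms. -/
import Mathlib


/-- Projective equality of homogeneous coordinate vectors. -/
def ProjEq {n : ℕ} (v w : Fin n → ℂ) : Prop := ∃ c : ℂ, c ≠ 0 ∧ w = c • v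

/-- The cubic form `W³ + W(X² + Y² + Z²) + βXYZ` in coordinates
`(W, X, Y, Z) = (v 0, v 1, v 2, v 3)`. -/
def cubicβ (β : ℂ) (v : Fin 4 → ℂ) : ℂ :=
  v 0 ^ 3 + v 0 * (v 1 ^ 2 + v 2 ^ 2 + v 3 ^ 2) + β * (v 1 * v 2 * v 3)

/-- The cyclic permutation `(W:X:Y:Z) ↦ (W:Y:Z:X)`. -/
def cyc (v : Fin 4 → ℂ) : Fin 4 → ℂ := ![v 0, v 2, v 3, v 1]

/-- The automorphism `(W:X:Y:Z) ↦ (W:X:-Y:-Z)`. -/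
def inv₁ (v : Fin 4 → ℂ) : Fin 4 → ℂ := ![v 0, v 1, -v 2, -v 3]

/-- The automorphism `(W:X:Y:Z) ↦ (W:-X:-Y:Z)`. -/
def inv₂ (v : Fin 4 → ℂ) : Fin 4 → ℂ := ![v 0, -v 1, -v 2, v 3]

lemma no_pe {u w : ℂ} (hu : u ≠ 0) (hw : w ≠ 0) {a b : Fin 4 → ℂ} {i : Fin 4}
    (ha0 : a 0 = u) (hb0 : b 0 = u) (hai : a i = w) (hbi : b i = -w) :
    ¬ ProjEq a b := by
  rintro ⟨c, hc, h⟩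
  have h0 : u = c * u := by
    have := congrFun h 0; simpa [ha0, hb0] using this
  have hc1 : c = 1 := mul_right_cancel₀ hu (by rw [one_mul, ← h0])
  have hi : -w = c * w := by
    have := congrFun h i; simpa [hai, hbi] using this
  rw [hc1, one_mul] at hi
  exact hw (by linear_combination (-1/2 : ℂ) * hi)

lemma fixed_form (β : ℂ) (hβ : β ≠ 0) (v : Fin 4 → ℂ) (hv : v ≠ 0)
    (h0 : cubicβ β v = 0) (hcy : ProjEq v (cyc v)) :
    ∃ u w : ℂ, u ≠ 0 ∧ w ≠ 0 ∧ v = ![u, w, w, w] := by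
  obtain ⟨c, hc, hcyc⟩ := hcy
  have e0 : v 0 = c * v 0 := by have := congrFun hcyc 0; simpa [cyc] using this
  have e1 : v 2 = c * v 1 := by have := congrFun hcyc 1; simpa [cyc] using this
  have e2 : v 3 = c * v 2 := by have := congrFun hcyc 2; simpa [cyc] using this
  have e3 : v 1 = c * v 3 := by have := congrFun hcyc 3; simpa [cyc] using this
  have hv1 : v 1 ≠ 0 := by
    intro h1
    have h2 : v 2 = 0 := by rw [e1, h1, mul_zero]
    have h3 : v 3 = 0 := by rw [e2, h2, mul_zero]
    have hcube : v 0 ^ 3 = 0 := by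
      unfold cubicβ at h0; rw [h1, h2, h3] at h0; linear_combination h0
    have h00 : v 0 = 0 := pow_eq_zero_iff (by norm_num) |>.mp hcube
    exact hv (funext fun i => by fin_cases i <;> assumption)
  have hv3 : v 3 ≠ 0 := fun h => hv1 (by rw [e3, h, mul_zero])
  have hv2 : v 2 ≠ 0 := fun h => hv3 (by rw [e2, h, mul_zero])
  have hv0 : v 0 ≠ 0 := by
    intro h00
    unfold cubicβ at h0; rw [h00] at h0
    have hb : β * (v 1 * v 2 * v 3) = 0 := by linear_combination h0
    have : β = 0 := by
      rcases mul_eq_zero.mp hb with h | h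
      · exact h
      · rcases mul_eq_zero.mp h with h' | h'
        · rcases mul_eq_zero.mp h' with h'' | h''
          · exact absurd h'' hv1
          · exact absurd h'' hv2
        · exact absurd h' hv3
    exact hβ this
  have hc1 : c = 1 := mul_right_cancel₀ hv0 (by rw [one_mul, ← e0])
  rw [hc1, one_mul] at e1 e2
  refine ⟨v 0, v 1, hv0, hv1, funext fun i => ?_⟩
  fin_cases i
  · rfl
  · rfl
  · exact e1
  · show v 3 = v 1
    rw [e2]; exact e1

/-- Let `S ⊂ ℙ³` be the smooth cubic surface
`W³ + W(X² + Y² + Z²) + βXYZ = 0`, `β ≠ 0`.  The maps `inv₁`, `inv₂`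
preserve `S`; every point of `S` fixed by the cyclic permutation
`(W:X:Y:Z) ↦ (W:Y:Z:X)` is of the form `(u : v : v : v)` with `u, v ∈ ℂ*`;
and the group generated by `inv₁` and `inv₂` sends each such point to three
other pairwise distinct points.  In particular no point of `S` is fixed by
the whole group generated by the three automorphisms. -/
theorem stmt_16 (β : ℂ) (hβ : β ≠ 0) :
    (∀ v : Fin 4 → ℂ, cubicβ β (inv₁ v) = cubicβ β v ∧
      cubicβ β (inv₂ v) = cubicβ β v) ∧
    (∀ v : Fin 4 → ℂ, v ≠ 0 → cubicβ β v = 0 → ProjEq v (cyc v) →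
      (∃ u w : ℂ, u ≠ 0 ∧ w ≠ 0 ∧ ProjEq ![u, w, w, w] v) ∧
      (¬ ProjEq v (inv₁ v) ∧ ¬ ProjEq v (inv₂ v) ∧
        ¬ ProjEq v (inv₁ (inv₂ v)) ∧ ¬ ProjEq (inv₁ v) (inv₂ v) ∧
        ¬ ProjEq (inv₁ v) (inv₁ (inv₂ v)) ∧
        ¬ ProjEq (inv₂ v) (inv₁ (inv₂ v)))) ∧
    ¬ ∃ v : Fin 4 → ℂ, v ≠ 0 ∧ cubicβ β v = 0 ∧ ProjEq v (cyc v) ∧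
      ProjEq v (inv₁ v) ∧ ProjEq v (inv₂ v) := by
  have part2 : ∀ v : Fin 4 → ℂ, v ≠ 0 → cubicβ β v = 0 → ProjEq v (cyc v) →
      (∃ u w : ℂ, u ≠ 0 ∧ w ≠ 0 ∧ ProjEq ![u, w, w, w] v) ∧
      (¬ ProjEq v (inv₁ v) ∧ ¬ ProjEq v (inv₂ v) ∧
        ¬ ProjEq v (inv₁ (inv₂ v)) ∧ ¬ ProjEq (inv₁ v) (inv₂ v) ∧
        ¬ ProjEq (inv₁ v) (inv₁ (inv₂ v)) ∧
        ¬ ProjEq (inv₂ v) (inv₁ (inv₂ v))) := by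
    intro v hv h0 hcy
    obtain ⟨u, w, hu, hw, hveq⟩ := fixed_form β hβ v hv h0 hcy
    subst hveq
    refine ⟨⟨u, w, hu, hw, 1, one_ne_zero, (one_smul _ _).symm⟩, ?_, ?_, ?_, ?_, ?_, ?_⟩
    · exact no_pe hu hw (i := 2) rfl rfl rfl rfl
    · exact no_pe hu hw (i := 1) rfl rfl rfl rfl
    · exact no_pe hu hw (i := 1) rfl rfl rfl rfl
    · exact no_pe hu hw (i := 1) rfl rfl rfl rfl
    · exact no_pe hu hw (i := 1) rfl rfl rfl rfl
    · exact no_pe hu hw (i := 3) rfl rfl rfl rfl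
  refine ⟨fun v => ⟨?_, ?_⟩, part2, ?_⟩
  · show cubicβ β ![v 0, v 1, -v 2, -v 3] = cubicβ β v
    unfold cubicβ; simp
  · show cubicβ β ![v 0, -v 1, -v 2, v 3] = cubicβ β v
    unfold cubicβ; simp
  · rintro ⟨v, hv, h0, hcy, h1, -⟩
    exact (part2 v hv h0 hcy).2.1 h1
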